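/- Let $f:[0,\infty)\to[0,\infty)$ be monotone decreasing with $f(0)=1$ and $\int_0^\infty t^{d-1}f(t)^2\,dt<\infty$, and let $X\subset\mathbb{R}^n$ be separated ($d_*(X)>0$) with linear span of dimension $d$. Then $\sup_{j}\sum_{k=1}^\infty f(|x_k-x_j|)^2 \le 1 + d^2\left(\frac{5}{d_*(X)}\right)^d \int_0^\infty s^{d-1}f(s)^2\,ds < \infty$. -/

import Mathlib

open Set MeasureTheory ENNReal
open Metric Finset

set_option maxHeartbeats 1000000


lemma pack_aux (d : ℕ) {δ R : ℝ} (hδ : 0 < δ) (hR : 0 ≤ R) (c : EuclideanSpace ℝ (Fin d))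
    (s : Finset (EuclideanSpace ℝ (Fin d)))
    (hsep : ∀ x ∈ s, ∀ y ∈ s, x ≠ y → δ ≤ dist x y)
    (hball : ∀ x ∈ s, dist x c ≤ R) :
    (s.card : ℝ) ≤ (2 * R / δ + 1) ^ d := by
  set μ : Measure (EuclideanSpace ℝ (Fin d)) := volume
  set u : ℝ := δ / 2 with hu
  have hu0 : 0 < u := by positivity
  have hdisj : (↑s : Set (EuclideanSpace ℝ (Fin d))).PairwiseDisjoint
      (fun x => Metric.ball x u) := by
    intro x hx y hy hxy
    refine Set.disjoint_left.2 fun z hzx hzy => ?_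
    have : dist x y ≤ dist x z + dist z y := dist_triangle _ _ _
    have h1 : dist x z < u := by simpa [dist_comm] using hzx
    have h2 : dist z y < u := by simpa [dist_comm] using hzy
    have := hsep x hx y hy hxy
    have : δ ≤ dist x z + dist z y := le_trans this (dist_triangle _ _ _)
    nlinarith
  have hsum : ∑ x ∈ s, μ (Metric.ball x u) = μ (⋃ x ∈ s, Metric.ball x u) :=
    (measure_biUnion_finset hdisj fun _ _ => measurableSet_ball).symm
  have hsub : (⋃ x ∈ s, Metric.ball x u) ⊆ Metric.closedBall c (R + u) := by
    intro z hz
    simp only [Set.mem_iUnion] at hz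
    obtain ⟨x, hx, hzx⟩ := hz
    have : dist z x < u := mem_ball.1 hzx
    have := hball x hx
    have : dist z c ≤ dist z x + dist x c := dist_triangle _ _ _
    simp only [Metric.mem_closedBall]
    have hzx' : dist z x < u := mem_ball.1 hzx
    linarith [hball x hx]
  have hfr : Module.finrank ℝ (EuclideanSpace ℝ (Fin d)) = d := finrank_euclideanSpace_fin
  have hballvol : ∀ x : EuclideanSpace ℝ (Fin d),
      μ (Metric.ball x u) = ENNReal.ofReal (u ^ d) * μ (Metric.ball 0 1) := by
    intro x
    rw [Measure.addHaar_ball_of_pos μ x hu0, hfr]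
  have hcb : μ (Metric.closedBall c (R + u)) =
      ENNReal.ofReal ((R + u) ^ d) * μ (Metric.ball 0 1) := by
    rw [Measure.addHaar_closedBall μ c (by positivity), hfr]
  have hineq : (s.card : ℝ≥0∞) * (ENNReal.ofReal (u ^ d) * μ (Metric.ball 0 1)) ≤
      ENNReal.ofReal ((R + u) ^ d) * μ (Metric.ball 0 1) := by
    calc (s.card : ℝ≥0∞) * (ENNReal.ofReal (u ^ d) * μ (Metric.ball 0 1))
        = ∑ x ∈ s, μ (Metric.ball x u) := by
          simp [hballvol, Finset.sum_const, nsmul_eq_mul]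
      _ = μ (⋃ x ∈ s, Metric.ball x u) := hsum
      _ ≤ μ (Metric.closedBall c (R + u)) := measure_mono hsub
      _ = _ := hcb
  have hB0 : μ (Metric.ball 0 1) ≠ 0 := (measure_ball_pos μ 0 one_pos).ne'
  have hBtop : μ (Metric.ball 0 1) ≠ ⊤ := measure_ball_lt_top.ne
  rw [← mul_assoc] at hineq
  have h2 : (s.card : ℝ≥0∞) * ENNReal.ofReal (u ^ d) ≤ ENNReal.ofReal ((R + u) ^ d) :=
    (ENNReal.mul_le_mul_iff_left hB0 hBtop).1 hineq
  have h3 : ENNReal.ofReal ((s.card : ℝ) * u ^ d) ≤ ENNReal.ofReal ((R + u) ^ d) := by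
    rwa [ENNReal.ofReal_mul (by positivity), ENNReal.ofReal_natCast]
  have h4 : (s.card : ℝ) * u ^ d ≤ (R + u) ^ d :=
    (ENNReal.ofReal_le_ofReal_iff (by positivity)).1 h3
  have h5 : (s.card : ℝ) ≤ ((R + u) / u) ^ d := by
    rw [div_pow, le_div_iff₀ (by positivity)]
    exact h4
  have : (R + u) / u = 2 * R / δ + 1 := by
    rw [hu]; field_simp
  rwa [this] at h5


lemma pow_sub_pow_le_aux {a b : ℝ} (d : ℕ) (hb : 0 ≤ b) (hba : b ≤ a) :
    a ^ d - b ^ d ≤ d * (a - b) * a ^ (d - 1) := by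
  have ha : 0 ≤ a := hb.trans hba
  have h := geom_sum₂_mul a b d
  rw [← h]
  have hterm : ∀ i ∈ Finset.range d, a ^ i * b ^ (d - 1 - i) ≤ a ^ (d - 1) := by
    intro i hi
    have hi' : i < d := Finset.mem_range.1 hi
    calc a ^ i * b ^ (d - 1 - i) ≤ a ^ i * a ^ (d - 1 - i) := by
          exact mul_le_mul_of_nonneg_left (pow_le_pow_left₀ hb hba _) (by positivity)
      _ = a ^ (d - 1) := by rw [← pow_add]; congr 1; omega
  have hsum : (∑ i ∈ Finset.range d, a ^ i * b ^ (d - 1 - i)) ≤ d * a ^ (d - 1) := by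
    calc (∑ i ∈ Finset.range d, a ^ i * b ^ (d - 1 - i))
        ≤ ∑ _i ∈ Finset.range d, a ^ (d - 1) := Finset.sum_le_sum hterm
      _ = d * a ^ (d - 1) := by simp [mul_comm]
  have hab : 0 ≤ a - b := sub_nonneg.2 hba
  calc (∑ i ∈ Finset.range d, a ^ i * b ^ (d - 1 - i)) * (a - b)
      ≤ (d * a ^ (d - 1)) * (a - b) := mul_le_mul_of_nonneg_right hsum hab
    _ = d * (a - b) * a ^ (d - 1) := by ring

lemma le_pow_sub_pow_aux {a b : ℝ} (d : ℕ) (hd : 1 ≤ d) (hb : 0 ≤ b) (hba : b ≤ a) :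
    (a - b) * a ^ (d - 1) ≤ a ^ d - b ^ d := by
  have ha : 0 ≤ b := hb
  have h := geom_sum₂_mul a b d
  rw [← h]
  have hab : 0 ≤ a - b := sub_nonneg.2 hba
  rw [mul_comm (a - b)]
  refine mul_le_mul_of_nonneg_right ?_ hab
  have hmem : d - 1 ∈ Finset.range d := Finset.mem_range.2 (by omega)
  have := Finset.single_le_sum (f := fun i => a ^ i * b ^ (d - 1 - i))
    (fun i _ => mul_nonneg (pow_nonneg (hb.trans hba) _) (pow_nonneg hb _)) hmem
  simpa using this

lemma key_ineq (d : ℕ) (hd : 1 ≤ d) (x : ℝ) (hx : 0 ≤ x) :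
    (2 * x + 5) ^ d - (2 * x + 3) ^ d ≤ d * 5 ^ d * ((x + 1) ^ d - x ^ d) := by
  have h1 : (2 * x + 5) ^ d - (2 * x + 3) ^ d ≤ d * 2 * (2 * x + 5) ^ (d - 1) := by
    have := pow_sub_pow_le_aux (a := 2 * x + 5) (b := 2 * x + 3) d (by linarith) (by linarith)
    calc (2 * x + 5) ^ d - (2 * x + 3) ^ d
        ≤ d * ((2 * x + 5) - (2 * x + 3)) * (2 * x + 5) ^ (d - 1) := this
      _ = d * 2 * (2 * x + 5) ^ (d - 1) := by ring_nf
  have h2 : (2 : ℝ) * (2 * x + 5) ^ (d - 1) ≤ 5 ^ d * (x + 1) ^ (d - 1) := by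
    have h5 : (5 : ℝ) ^ d = 5 * 5 ^ (d - 1) := by
      conv_lhs => rw [show d = (d - 1) + 1 by omega]
      rw [pow_succ]; ring
    rw [h5]
    have hle : (2 * x + 5) ^ (d - 1) ≤ (5 * (x + 1)) ^ (d - 1) :=
      pow_le_pow_left₀ (by linarith) (by linarith) _
    calc (2 : ℝ) * (2 * x + 5) ^ (d - 1) ≤ 2 * (5 * (x + 1)) ^ (d - 1) := by
          exact mul_le_mul_of_nonneg_left hle (by norm_num)
      _ = 2 * (5 ^ (d - 1) * (x + 1) ^ (d - 1)) := by rw [mul_pow]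
      _ ≤ 5 * (5 ^ (d - 1) * (x + 1) ^ (d - 1)) := by
          have : (0:ℝ) ≤ 5 ^ (d - 1) * (x + 1) ^ (d - 1) := by positivity
          nlinarith
      _ = 5 * 5 ^ (d - 1) * (x + 1) ^ (d - 1) := by ring
  have h3 : (x + 1) ^ (d - 1) ≤ (x + 1) ^ d - x ^ d := by
    have := le_pow_sub_pow_aux (a := x + 1) (b := x) d hd hx (by linarith)
    simpa using this
  calc (2 * x + 5) ^ d - (2 * x + 3) ^ d
      ≤ d * 2 * (2 * x + 5) ^ (d - 1) := h1
    _ = d * (2 * (2 * x + 5) ^ (d - 1)) := by ring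
    _ ≤ d * (5 ^ d * (x + 1) ^ (d - 1)) := by
        refine mul_le_mul_of_nonneg_left h2 (by positivity)
    _ ≤ d * (5 ^ d * ((x + 1) ^ d - x ^ d)) := by
        refine mul_le_mul_of_nonneg_left ?_ (by positivity)
        exact mul_le_mul_of_nonneg_left h3 (by positivity)
    _ = d * 5 ^ d * ((x + 1) ^ d - x ^ d) := by ring


/-- If `f` is nonnegative monotone decreasing with `f 0 = 1`, `∫_0^∞ t^{d-1} f(t)² dt < ∞`,
and `X ⊂ ℝⁿ` is separated with linear span of dimension `d`, then the columns of the Schoenberg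
matrix are uniformly in `ℓ²`:
`sup_j ∑_k f(|x_k - x_j|)² ≤ 1 + d² (5/d_*(X))^d ∫_0^∞ s^{d-1} f(s)² ds`. -/
theorem schoenberg_columns_l2 (n : ℕ) (f : ℝ → ℝ) (hpos : ∀ t, 0 ≤ t → 0 ≤ f t)
    (hmono : AntitoneOn f (Set.Ici (0 : ℝ))) (hf0 : f 0 = 1)
    (X : ℕ → EuclideanSpace ℝ (Fin n)) (hinj : Function.Injective X)
    (hsep : 0 < sInf {r : ℝ | ∃ i j : ℕ, i ≠ j ∧ r = dist (X i) (X j)})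
    (d : ℕ) (hd : Module.finrank ℝ (Submodule.span ℝ (Set.range X)) = d)
    (hint : IntegrableOn (fun t : ℝ => t ^ (d - 1) * f t ^ 2) (Set.Ioi 0)) :
    ∀ j : ℕ, ∑' k : ℕ, ENNReal.ofReal (f (dist (X k) (X j)) ^ 2) ≤
      ENNReal.ofReal (1 + (d : ℝ) ^ 2 *
        (5 / sInf {r : ℝ | ∃ i j : ℕ, i ≠ j ∧ r = dist (X i) (X j)}) ^ d *
        ∫ s in Set.Ioi (0 : ℝ), s ^ (d - 1) * f s ^ 2) := by
  intro j
  set δ := sInf {r : ℝ | ∃ i j : ℕ, i ≠ j ∧ r = dist (X i) (X j)} with hδdef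
  have hδ : 0 < δ := hsep
  have hsepd : ∀ i k : ℕ, i ≠ k → δ ≤ dist (X i) (X k) := by
    intro i k hik
    apply csInf_le
    · exact ⟨0, fun r ⟨a, b, hab, hr⟩ => hr ▸ dist_nonneg⟩
    · exact ⟨i, k, hik, rfl⟩
  clear_value δ
  have hd1 : 1 ≤ d := by
    rcases Nat.eq_zero_or_pos d with h0 | h
    · exfalso
      rw [h0] at hd
      have hsub : Subsingleton (Submodule.span ℝ (Set.range X)) :=
        Module.finrank_zero_iff.1 hd
      have hXV : ∀ k, X k ∈ Submodule.span ℝ (Set.range X) :=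
        fun k => Submodule.subset_span ⟨k, rfl⟩
      have h01 : X 0 = X 1 := by
        have := hsub.elim ⟨X 0, hXV 0⟩ ⟨X 1, hXV 1⟩
        exact congrArg Subtype.val this
      exact absurd (hinj h01) (by norm_num)
    · exact h
  set V := Submodule.span ℝ (Set.range X) with hV
  have hXV : ∀ k, X k ∈ V := fun k => Submodule.subset_span ⟨k, rfl⟩
  let e : V ≃ₗᵢ[ℝ] EuclideanSpace ℝ (Fin d) :=
    ((stdOrthonormalBasis ℝ V).reindex (finCongr hd)).repr
  let Y : ℕ → EuclideanSpace ℝ (Fin d) := fun k => e ⟨X k, hXV k⟩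
  have hYdist : ∀ k l, dist (Y k) (Y l) = dist (X k) (X l) := by
    intro k l
    rw [show Y k = e ⟨X k, hXV k⟩ from rfl, show Y l = e ⟨X l, hXV l⟩ from rfl,
      e.dist_map]
    exact Subtype.dist_eq _ _
  have hYinj : Function.Injective Y := by
    intro k l hkl
    apply hinj
    have : dist (X k) (X l) = 0 := by rw [← hYdist k l, hkl, dist_self]
    exact dist_eq_zero.1 this
  clear_value Y
  clear e
  -- reduction to finite sums
  have hIpos : 0 ≤ ∫ s in Set.Ioi (0:ℝ), s ^ (d - 1) * f s ^ 2 := by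
    apply setIntegral_nonneg measurableSet_Ioi
    intro s hs
    have : (0:ℝ) ≤ s := le_of_lt hs
    positivity
  rw [ENNReal.tsum_eq_iSup_sum]
  refine iSup_le fun F => ?_
  rw [← ENNReal.ofReal_sum_of_nonneg (fun k _ => sq_nonneg _)]
  apply ENNReal.ofReal_le_ofReal
  -- now a real inequality
  set r : ℕ → ℝ := fun k => dist (X k) (X j) with hr
  set I := ∫ s in Set.Ioi (0:ℝ), s ^ (d - 1) * f s ^ 2 with hI
  set C : ℝ := (d : ℝ) ^ 2 * (5 / δ) ^ d with hC
  show ∑ k ∈ F, f (r k) ^ 2 ≤ 1 + C * I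
  set F' : Finset ℕ := F.erase j with hF'
  have hrδ : ∀ k ∈ F', δ ≤ r k := fun k hk =>
    hsepd k j (Finset.ne_of_mem_erase hk)
  have hg2 : ∀ a b : ℝ, 0 ≤ a → a ≤ b → f b ^ 2 ≤ f a ^ 2 := by
    intro a b ha hab
    have hb : 0 ≤ b := ha.trans hab
    have h1 := hmono (Set.mem_Ici.2 ha) (Set.mem_Ici.2 hb) hab
    have h2 := hpos b hb
    nlinarith [hpos a ha]
  have hT : ∑ k ∈ F', f (r k) ^ 2 ≤ C * I := by
    classical
    set P : ℕ → Finset ℕ := fun m => F'.filter (fun k => r k < ((m : ℝ) + 1) * δ) with hP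
    set c : ℕ → ℝ := fun m => if m = 0 then 0 else (2 * (m : ℝ) + 3) ^ d with hc
    set h : ℕ → ℝ := fun m => f ((m : ℝ) * δ) ^ 2 with hh
    have hh0 : ∀ m : ℕ, 0 ≤ h m := fun m => sq_nonneg _
    have hhmono : ∀ m : ℕ, h (m + 1) ≤ h m := by
      intro m
      have hm0 : (0 : ℝ) ≤ (m : ℝ) * δ := mul_nonneg (Nat.cast_nonneg m) hδ.le
      have := hg2 ((m : ℝ) * δ) (((m : ℝ) + 1) * δ) hm0 (by nlinarith [hδ.le])
      simp only [hh]
      push_cast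
      exact this
    have hP0 : P 0 = ∅ := by
      simp only [hP]
      apply Finset.filter_false_of_mem
      intro k hk
      have := hrδ k hk
      push_neg
      push_cast
      linarith
    have hPmono : ∀ m, P m ⊆ P (m + 1) := by
      intro m
      simp only [hP]
      apply Finset.monotone_filter_right
      intro k hk
      have hle : ((m : ℝ) + 1) * δ ≤ ((m : ℝ) + 1 + 1) * δ := by nlinarith [hδ.le]
      push_cast
      intro hk2
      linarith
    have hQc : ∀ m : ℕ, ((P m).card : ℝ) ≤ c m := by
      intro m
      rcases Nat.eq_zero_or_pos m with rfl | hm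
      · simp [hP0, hc]
      · have hcm : c m = (2 * (m : ℝ) + 3) ^ d := by
          simp only [hc]; rw [if_neg hm.ne']
        rw [hcm]
        have hsepY : ∀ x ∈ (P m).image Y, ∀ y ∈ (P m).image Y, x ≠ y → δ ≤ dist x y := by
          intro x hx y hy hxy
          obtain ⟨k, hk, rfl⟩ := Finset.mem_image.1 hx
          obtain ⟨l, hl, rfl⟩ := Finset.mem_image.1 hy
          have hkl : k ≠ l := fun hkl => hxy (by rw [hkl])
          rw [hYdist]
          exact hsepd k l hkl
        have hballY : ∀ x ∈ (P m).image Y, dist x (Y j) ≤ ((m : ℝ) + 1) * δ := by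
          intro x hx
          obtain ⟨k, hk, rfl⟩ := Finset.mem_image.1 hx
          rw [hYdist]
          have hk' : k ∈ F' ∧ r k < ((m : ℝ) + 1) * δ := by simpa [hP] using hk
          exact le_of_lt hk'.2
        have hpk := pack_aux d hδ (R := ((m : ℝ) + 1) * δ)
          (mul_nonneg (by positivity) hδ.le) (Y j)
          ((P m).image Y) hsepY hballY
        rw [Finset.card_image_of_injective _ hYinj] at hpk
        have heq : (2 * (((m : ℝ) + 1) * δ) / δ + 1) = 2 * (m : ℝ) + 3 := by
          field_simp [hδ.ne']
          ring
        rwa [heq] at hpk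
    have claimA : ∀ M : ℕ, (∑ k ∈ P M, f (r k) ^ 2) + (c M - ((P M).card : ℝ)) * h M ≤
        ∑ m ∈ Finset.range M, (c (m + 1) - c m) * h (m + 1) := by
      intro M
      induction M with
      | zero => simp [hP0, hc]
      | succ M IH =>
        have hsub := hPmono M
        have hsd : ∑ k ∈ P (M + 1) \ P M, f (r k) ^ 2 + ∑ k ∈ P M, f (r k) ^ 2
            = ∑ k ∈ P (M + 1), f (r k) ^ 2 := Finset.sum_sdiff hsub
        have hcard : (((P (M + 1) \ P M).card : ℕ) : ℝ)
            = ((P (M + 1)).card : ℝ) - ((P M).card : ℝ) := by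
          rw [Finset.card_sdiff_of_subset hsub, Nat.cast_sub (Finset.card_le_card hsub)]
        have hbd : ∑ k ∈ P (M + 1) \ P M, f (r k) ^ 2 ≤
            (((P (M + 1)).card : ℝ) - ((P M).card : ℝ)) * h (M + 1) := by
          have hterm : ∀ k ∈ P (M + 1) \ P M, f (r k) ^ 2 ≤ h (M + 1) := by
            intro k hk
            obtain ⟨hk1, hk2⟩ := Finset.mem_sdiff.1 hk
            have hk1' : k ∈ F' ∧ r k < ((M : ℝ) + 1 + 1) * δ := by simpa [hP] using hk1
            have hkF : k ∈ F' := hk1'.1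
            have hnot : ¬ r k < ((M : ℝ) + 1) * δ := by
              intro hlt
              exact hk2 (by simp only [hP]; exact Finset.mem_filter.2 ⟨hkF, hlt⟩)
            have hge : ((M : ℝ) + 1) * δ ≤ r k := not_lt.1 hnot
            have := hg2 (((M : ℝ) + 1) * δ) (r k) (mul_nonneg (by positivity) hδ.le) hge
            simp only [hh]
            push_cast
            exact this
          calc ∑ k ∈ P (M + 1) \ P M, f (r k) ^ 2
              ≤ ∑ _k ∈ P (M + 1) \ P M, h (M + 1) := Finset.sum_le_sum hterm
            _ = (((P (M + 1) \ P M).card : ℕ) : ℝ) * h (M + 1) := by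
                rw [Finset.sum_const, nsmul_eq_mul]
            _ = _ := by rw [hcard]
        have hmm : (c M - ((P M).card : ℝ)) * h (M + 1) ≤ (c M - ((P M).card : ℝ)) * h M :=
          mul_le_mul_of_nonneg_left (hhmono M) (by linarith [hQc M])
        rw [Finset.sum_range_succ]
        have e1 : (((P (M + 1)).card : ℝ) - ((P M).card : ℝ)) * h (M + 1)
              + (c (M + 1) - ((P (M + 1)).card : ℝ)) * h (M + 1)
            = (c (M + 1) - c M) * h (M + 1) + (c M - ((P M).card : ℝ)) * h (M + 1) := by
          ring
        linarith [hsd, hbd, IH, hmm, e1]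
    have hcb : ∀ m : ℕ, c (m + 1) - c m ≤ (d : ℝ) * 5 ^ d * (((m : ℝ) + 1) ^ d - (m : ℝ) ^ d) := by
      intro m
      rcases Nat.eq_zero_or_pos m with rfl | hm
      · simp only [hc]
        norm_num
        have h1 : (1 : ℝ) ≤ (d : ℝ) := by exact_mod_cast hd1
        have h5 : (0 : ℝ) < 5 ^ d := by positivity
        rw [zero_pow (by omega : d ≠ 0)]
        nlinarith
      · have e1 : c (m + 1) = (2 * (m : ℝ) + 5) ^ d := by
          simp only [hc]
          rw [if_neg (Nat.succ_ne_zero m)]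
          push_cast
          ring_nf
        have e2 : c m = (2 * (m : ℝ) + 3) ^ d := by
          simp only [hc]; rw [if_neg hm.ne']
        rw [e1, e2]
        exact key_ineq d hd1 (m : ℝ) (Nat.cast_nonneg m)
    have hiint : ∀ a b : ℝ, 0 ≤ a →
        IntegrableOn (fun s => s ^ (d - 1) * f s ^ 2) (Set.Ioc a b) := by
      intro a b ha
      exact hint.mono_set (fun s hs => lt_of_le_of_lt ha hs.1)
    have hJ : ∀ m : ℕ, h (m + 1) * ((((m : ℝ) + 1) ^ d - (m : ℝ) ^ d) * δ ^ d / d) ≤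
        ∫ s in Set.Ioc ((m : ℝ) * δ) (((m : ℝ) + 1) * δ), s ^ (d - 1) * f s ^ 2 := by
      intro m
      have ha : (0 : ℝ) ≤ (m : ℝ) * δ := mul_nonneg (Nat.cast_nonneg m) hδ.le
      have hab : (m : ℝ) * δ ≤ ((m : ℝ) + 1) * δ := by nlinarith [hδ.le]
      have i1 := hiint ((m : ℝ) * δ) (((m : ℝ) + 1) * δ) ha
      have i2 : IntegrableOn (fun s => s ^ (d - 1) * f (((m : ℝ) + 1) * δ) ^ 2)
          (Set.Ioc ((m : ℝ) * δ) (((m : ℝ) + 1) * δ)) := by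
        apply Continuous.integrableOn_Ioc
        exact (continuous_pow _).mul continuous_const
      have i3 : (∫ s in Set.Ioc ((m : ℝ) * δ) (((m : ℝ) + 1) * δ),
            s ^ (d - 1) * f (((m : ℝ) + 1) * δ) ^ 2) ≤
          ∫ s in Set.Ioc ((m : ℝ) * δ) (((m : ℝ) + 1) * δ), s ^ (d - 1) * f s ^ 2 := by
        apply setIntegral_mono_on i2 i1 measurableSet_Ioc
        intro s hs
        have hs0 : 0 ≤ s := le_trans ha hs.1.le
        have hf2 := hg2 s (((m : ℝ) + 1) * δ) hs0 hs.2
        have hsd : 0 ≤ s ^ (d - 1) := by positivity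
        exact mul_le_mul_of_nonneg_left hf2 hsd
      have i4 : (∫ s in Set.Ioc ((m : ℝ) * δ) (((m : ℝ) + 1) * δ),
            s ^ (d - 1) * f (((m : ℝ) + 1) * δ) ^ 2)
          = ((((m : ℝ) + 1) * δ) ^ d - ((m : ℝ) * δ) ^ d) / d * f (((m : ℝ) + 1) * δ) ^ 2 := by
        rw [← intervalIntegral.integral_of_le hab, intervalIntegral.integral_mul_const,
          integral_pow]
        have hdd : d - 1 + 1 = d := Nat.succ_pred_eq_of_pos hd1
        have hcast : ((d - 1 : ℕ) : ℝ) + 1 = (d : ℝ) := by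
          rw [Nat.cast_sub hd1]
          push_cast
          ring
        rw [hdd, hcast]
      have i5 : h (m + 1) * ((((m : ℝ) + 1) ^ d - (m : ℝ) ^ d) * δ ^ d / d)
          = ((((m : ℝ) + 1) * δ) ^ d - ((m : ℝ) * δ) ^ d) / d * f (((m : ℝ) + 1) * δ) ^ 2 := by
        have hb : h (m + 1) = f (((m : ℝ) + 1) * δ) ^ 2 := by
          simp only [hh]
          push_cast
          ring_nf
        rw [hb, mul_pow, mul_pow]
        ring
      rw [i5, ← i4]
      exact i3
    obtain ⟨M, hM⟩ : ∃ M : ℕ, ∀ k ∈ F', r k < ((M : ℝ) + 1) * δ := by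
      obtain ⟨M, hM⟩ := exists_nat_gt ((∑ k ∈ F', r k) / δ)
      refine ⟨M, fun k hk => ?_⟩
      have h1 : r k ≤ ∑ k ∈ F', r k :=
        Finset.single_le_sum (fun i _ => dist_nonneg) hk
      rw [div_lt_iff₀ hδ] at hM
      nlinarith [hδ.le]
    have hPM : P M = F' := by
      simp only [hP]
      apply Finset.filter_true_of_mem
      intro k hk
      exact hM k hk
    have hCnn : 0 ≤ C := by
      rw [hC]
      exact mul_nonneg (by positivity) (pow_nonneg (div_nonneg (by norm_num) hδ.le) d)
    have hfin : (∫ s in Set.Ioc (0 : ℝ) ((M : ℝ) * δ), s ^ (d - 1) * f s ^ 2) ≤ I := by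
      apply setIntegral_mono_set hint
      · filter_upwards [ae_restrict_mem measurableSet_Ioi] with s hs
        have hs0 : (0 : ℝ) < s := hs
        positivity
      · exact HasSubset.Subset.eventuallyLE (fun s hs => hs.1)
    have hsum2 : ∀ N : ℕ, ∑ m ∈ Finset.range N, (∫ s in Set.Ioc ((m : ℝ) * δ)
          (((m : ℝ) + 1) * δ), s ^ (d - 1) * f s ^ 2)
        = ∫ s in Set.Ioc (0 : ℝ) ((N : ℝ) * δ), s ^ (d - 1) * f s ^ 2 := by
      intro N
      induction N with
      | zero => simp
      | succ N IH =>
        rw [Finset.sum_range_succ, IH]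
        push_cast
        have h1 : (0 : ℝ) ≤ (N : ℝ) * δ := mul_nonneg (Nat.cast_nonneg N) hδ.le
        have h2 : (N : ℝ) * δ ≤ ((N : ℝ) + 1) * δ := by nlinarith [hδ.le]
        have hdisj : Disjoint (Set.Ioc (0 : ℝ) ((N : ℝ) * δ))
            (Set.Ioc ((N : ℝ) * δ) (((N : ℝ) + 1) * δ)) :=
          Set.Ioc_disjoint_Ioc_of_le le_rfl
        have hun : Set.Ioc (0 : ℝ) ((N : ℝ) * δ) ∪ Set.Ioc ((N : ℝ) * δ) (((N : ℝ) + 1) * δ)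
            = Set.Ioc (0 : ℝ) (((N : ℝ) + 1) * δ) := Set.Ioc_union_Ioc_eq_Ioc h1 h2
        rw [← hun, setIntegral_union hdisj measurableSet_Ioc
          (hiint _ _ le_rfl) (hiint _ _ h1)]
    calc ∑ k ∈ F', f (r k) ^ 2 = ∑ k ∈ P M, f (r k) ^ 2 := by rw [hPM]
      _ ≤ ∑ m ∈ Finset.range M, (c (m + 1) - c m) * h (m + 1) := by
          have hA := claimA M
          have hnn : 0 ≤ (c M - ((P M).card : ℝ)) * h M :=
            mul_nonneg (by linarith [hQc M]) (hh0 M)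
          linarith
      _ ≤ ∑ m ∈ Finset.range M, C * (h (m + 1) * ((((m : ℝ) + 1) ^ d - (m : ℝ) ^ d)
            * δ ^ d / d)) := by
          apply Finset.sum_le_sum
          intro m _
          have h2 : (c (m + 1) - c m) * h (m + 1)
              ≤ ((d : ℝ) * 5 ^ d * (((m : ℝ) + 1) ^ d - (m : ℝ) ^ d)) * h (m + 1) :=
            mul_le_mul_of_nonneg_right (hcb m) (hh0 _)
          have hδd : (δ : ℝ) ^ d ≠ 0 := pow_ne_zero d hδ.ne'
          have hdne : ((d : ℕ) : ℝ) ≠ 0 := Nat.cast_ne_zero.2 (by omega)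
          have h3 : C * (h (m + 1) * ((((m : ℝ) + 1) ^ d - (m : ℝ) ^ d) * δ ^ d / (d : ℝ)))
              = ((d : ℝ) * 5 ^ d * (((m : ℝ) + 1) ^ d - (m : ℝ) ^ d)) * h (m + 1)
                * ((d : ℝ) / (d : ℝ)) * (δ ^ d / δ ^ d) := by
            rw [hC, div_pow]
            ring
          rw [div_self hdne, div_self hδd, mul_one, mul_one] at h3
          linarith
      _ ≤ ∑ m ∈ Finset.range M, C * (∫ s in Set.Ioc ((m : ℝ) * δ) (((m : ℝ) + 1) * δ),
            s ^ (d - 1) * f s ^ 2) := by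
          apply Finset.sum_le_sum
          intro m _
          exact mul_le_mul_of_nonneg_left (hJ m) hCnn
      _ = C * ∫ s in Set.Ioc (0 : ℝ) ((M : ℝ) * δ), s ^ (d - 1) * f s ^ 2 := by
          rw [← hsum2 M, Finset.mul_sum]
      _ ≤ C * I := mul_le_mul_of_nonneg_left hfin hCnn
  by_cases hjF : j ∈ F
  · rw [← Finset.add_sum_erase F _ hjF]
    have : f (r j) ^ 2 = 1 := by simp [hr, hf0]
    rw [this]
    linarith
  · have hFe : F' = F := by rw [hF']; exact Finset.erase_eq_of_notMem hjF
    rw [← hFe]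
    linarith
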